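/- Let n ≥ 3 be an integer. At every point (k,l) of the region R = {(k,l) ∈ ℝ² : k ≥ 1, l ≥ 1, k + l ≤ n − 1}, the Hessian matrix of f is negative definite; that is, ∂²f/∂k² (k,l) < 0 and (∂²f/∂k²)(∂²f/∂l²) − (∂²f/∂k∂l)² > 0 on R. Consequently f is strictly concave on R. -/

import Mathlib

open Filter Real

/-- The function `f(k,l)` from the proof of Theorem 1 (with parameter `n`):
`f(k,l) = (k+l+1)·ln n − k·ln k − l·ln l + k + l − ((k+l)²/2)·ln 2 − ((k+l)/2)·ln 2
          − (n−k−l)·(2^{−k} + 2^{−l})`, where `2^{−k} = exp(−k·ln 2)`. -/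
noncomputable def f (n : ℕ) (k l : ℝ) : ℝ :=
  (k + l + 1) * Real.log n - k * Real.log k - l * Real.log l + k + l
    - ((k + l) ^ 2 / 2) * Real.log 2 - ((k + l) / 2) * Real.log 2
    - ((n : ℝ) - k - l) * (Real.exp (-k * Real.log 2) + Real.exp (-l * Real.log 2))

/-- The region `R = {(k,l) : k ≥ 1, l ≥ 1, k + l ≤ n − 1}`. -/
def region (n : ℕ) : Set (ℝ × ℝ) :=
  {p : ℝ × ℝ | 1 ≤ p.1 ∧ 1 ≤ p.2 ∧ p.1 + p.2 ≤ (n : ℝ) - 1}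

/-- `(k, l)` is a critical point of `f n`: both partial derivatives vanish. -/
def IsCritPt (n : ℕ) (k l : ℝ) : Prop :=
  deriv (fun k' => f n k' l) k = 0 ∧ deriv (fun l' => f n k l') l = 0

open Topology
set_option maxHeartbeats 1000000


noncomputable def fk (n : ℕ) (x y : ℝ) : ℝ :=
  Real.log n - Real.log x - (x + y) * Real.log 2 - Real.log 2 / 2
    + Real.exp (-x * Real.log 2) + Real.exp (-y * Real.log 2)
    + ((n : ℝ) - x - y) * Real.log 2 * Real.exp (-x * Real.log 2)

noncomputable def fkk (n : ℕ) (x y : ℝ) : ℝ :=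
  -x⁻¹ - Real.log 2 - 2 * Real.log 2 * Real.exp (-x * Real.log 2)
    - ((n : ℝ) - x - y) * Real.log 2 ^ 2 * Real.exp (-x * Real.log 2)

noncomputable def fkl (n : ℕ) (x y : ℝ) : ℝ :=
  -Real.log 2 - Real.log 2 * Real.exp (-x * Real.log 2) - Real.log 2 * Real.exp (-y * Real.log 2)


lemma line_hasDerivAt_f (n : ℕ) (p₁ p₂ v₁ v₂ t : ℝ) (hx : 0 < p₁ + t * v₁)
    (hy : 0 < p₂ + t * v₂) :
    HasDerivAt (fun s => f n (p₁ + s * v₁) (p₂ + s * v₂))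
      (v₁ * fk n (p₁ + t * v₁) (p₂ + t * v₂) + v₂ * fk n (p₂ + t * v₂) (p₁ + t * v₁)) t := by
  have hk' : HasDerivAt (fun s : ℝ => p₁ + s * v₁) v₁ t := by
    simpa using ((hasDerivAt_id t).mul_const v₁).const_add p₁
  have hl' : HasDerivAt (fun s : ℝ => p₂ + s * v₂) v₂ t := by
    simpa using ((hasDerivAt_id t).mul_const v₂).const_add p₂
  have h1 : HasDerivAt (fun s => ((p₁ + s * v₁) + (p₂ + s * v₂) + 1) * Real.log n)
      ((v₁ + v₂) * Real.log n) t := ((hk'.add hl').add_const 1).mul_const _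
  have h2 : HasDerivAt (fun s => (p₁ + s * v₁) * Real.log (p₁ + s * v₁))
      ((Real.log (p₁ + t * v₁) + 1) * v₁) t := by
    have := (Real.hasDerivAt_mul_log hx.ne').comp t hk'
    exact this
  have h3 : HasDerivAt (fun s => (p₂ + s * v₂) * Real.log (p₂ + s * v₂))
      ((Real.log (p₂ + t * v₂) + 1) * v₂) t := by
    have := (Real.hasDerivAt_mul_log hy.ne').comp t hl'
    exact this
  have h4 : HasDerivAt (fun s => (((p₁ + s * v₁) + (p₂ + s * v₂)) ^ 2 / 2) * Real.log 2)
      ((↑2 * ((p₁ + t * v₁) + (p₂ + t * v₂)) ^ 1 * (v₁ + v₂) / 2) * Real.log 2) t :=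
    (((hk'.add hl').pow 2).div_const 2).mul_const _
  have h5 : HasDerivAt (fun s => (((p₁ + s * v₁) + (p₂ + s * v₂)) / 2) * Real.log 2)
      (((v₁ + v₂) / 2) * Real.log 2) t := ((hk'.add hl').div_const 2).mul_const _
  have e1 : HasDerivAt (fun s => Real.exp (-(p₁ + s * v₁) * Real.log 2))
      (Real.exp (-(p₁ + t * v₁) * Real.log 2) * (-v₁ * Real.log 2)) t :=
    (hk'.neg.mul_const _).exp
  have e2 : HasDerivAt (fun s => Real.exp (-(p₂ + s * v₂) * Real.log 2))
      (Real.exp (-(p₂ + t * v₂) * Real.log 2) * (-v₂ * Real.log 2)) t :=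
    (hl'.neg.mul_const _).exp
  have h7 : HasDerivAt (fun s => ((n : ℝ) - (p₁ + s * v₁) - (p₂ + s * v₂)) *
      (Real.exp (-(p₁ + s * v₁) * Real.log 2) + Real.exp (-(p₂ + s * v₂) * Real.log 2)))
      ((0 - v₁ - v₂) * (Real.exp (-(p₁ + t * v₁) * Real.log 2)
          + Real.exp (-(p₂ + t * v₂) * Real.log 2))
        + ((n : ℝ) - (p₁ + t * v₁) - (p₂ + t * v₂)) *
          (Real.exp (-(p₁ + t * v₁) * Real.log 2) * (-v₁ * Real.log 2)
            + Real.exp (-(p₂ + t * v₂) * Real.log 2) * (-v₂ * Real.log 2))) t :=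
    (((hasDerivAt_const t ((n : ℝ))).sub hk').sub hl').mul (e1.add e2)
  have H := (((((((h1.sub h2).sub h3).add hk').add hl').sub h4).sub h5).sub h7)
  unfold f
  refine H.congr_deriv ?_
  unfold fk
  push_cast
  ring


lemma line_hasDerivAt_fk (n : ℕ) (p₁ p₂ v₁ v₂ t : ℝ) (hx : 0 < p₁ + t * v₁) :
    HasDerivAt (fun s => fk n (p₁ + s * v₁) (p₂ + s * v₂))
      (v₁ * fkk n (p₁ + t * v₁) (p₂ + t * v₂) + v₂ * fkl n (p₁ + t * v₁) (p₂ + t * v₂)) t := by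
  have hk' : HasDerivAt (fun s : ℝ => p₁ + s * v₁) v₁ t := by
    simpa using ((hasDerivAt_id t).mul_const v₁).const_add p₁
  have hl' : HasDerivAt (fun s : ℝ => p₂ + s * v₂) v₂ t := by
    simpa using ((hasDerivAt_id t).mul_const v₂).const_add p₂
  have h2 : HasDerivAt (fun s => Real.log (p₁ + s * v₁)) ((p₁ + t * v₁)⁻¹ * v₁) t := by
    have := (Real.hasDerivAt_log hx.ne').comp t hk'
    exact this
  have h3 : HasDerivAt (fun s => ((p₁ + s * v₁) + (p₂ + s * v₂)) * Real.log 2)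
      ((v₁ + v₂) * Real.log 2) t := (hk'.add hl').mul_const _
  have e1 : HasDerivAt (fun s => Real.exp (-(p₁ + s * v₁) * Real.log 2))
      (Real.exp (-(p₁ + t * v₁) * Real.log 2) * (-v₁ * Real.log 2)) t :=
    (hk'.neg.mul_const _).exp
  have e2 : HasDerivAt (fun s => Real.exp (-(p₂ + s * v₂) * Real.log 2))
      (Real.exp (-(p₂ + t * v₂) * Real.log 2) * (-v₂ * Real.log 2)) t :=
    (hl'.neg.mul_const _).exp
  have h7 : HasDerivAt (fun s => ((n : ℝ) - (p₁ + s * v₁) - (p₂ + s * v₂)) * Real.log 2 *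
      Real.exp (-(p₁ + s * v₁) * Real.log 2))
      ((0 - v₁ - v₂) * Real.log 2 * Real.exp (-(p₁ + t * v₁) * Real.log 2)
        + ((n : ℝ) - (p₁ + t * v₁) - (p₂ + t * v₂)) * Real.log 2 *
          (Real.exp (-(p₁ + t * v₁) * Real.log 2) * (-v₁ * Real.log 2))) t := by
    have := ((((hasDerivAt_const t ((n : ℝ))).sub hk').sub hl').mul_const (Real.log 2)).mul e1
    exact this
  have H := (((((hasDerivAt_const t (Real.log n)).sub h2).sub h3).sub
      (hasDerivAt_const t (Real.log 2 / 2))).add e1).add e2 |>.add h7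
  unfold fk
  refine H.congr_deriv ?_
  unfold fkk fkl
  ring


lemma exp_le_half {x : ℝ} (hx : 1 ≤ x) : Real.exp (-x * Real.log 2) ≤ 1 / 2 := by
  have h2 : (0:ℝ) < Real.log 2 := Real.log_pos (by norm_num)
  have : Real.exp (-x * Real.log 2) ≤ Real.exp (-Real.log 2) := by
    apply Real.exp_le_exp.mpr; nlinarith
  calc Real.exp (-x * Real.log 2) ≤ Real.exp (-Real.log 2) := this
    _ = 1 / 2 := by
        rw [Real.exp_neg, Real.exp_log (by norm_num : (0:ℝ) < 2)]; norm_num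


lemma fkk_neg (n : ℕ) (k l : ℝ) (hk : 1 ≤ k) (hm : 1 ≤ (n : ℝ) - k - l) : fkk n k l < 0 := by
  have h2 : (0:ℝ) < Real.log 2 := Real.log_pos (by norm_num)
  have hE : 0 < Real.exp (-k * Real.log 2) := Real.exp_pos _
  have hki : 0 < k⁻¹ := inv_pos.mpr (by linarith)
  unfold fkk
  nlinarith [mul_pos (mul_pos h2 h2) hE, mul_pos h2 hE]

lemma det_pos (n : ℕ) (k l : ℝ) (hk : 1 ≤ k) (hl : 1 ≤ l) (hm : 1 ≤ (n : ℝ) - k - l) :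
    0 < fkk n k l * fkk n l k - fkl n k l ^ 2 := by
  set a := Real.log 2 with ha
  have ha2 : (1/2:ℝ) < a := by rw [ha]; nlinarith [Real.log_two_gt_d9]
  have ha0 : (0:ℝ) < a := by linarith
  set E := Real.exp (-k * a) with hEdef
  set F := Real.exp (-l * a) with hFdef
  have hE : 0 < E := Real.exp_pos _
  have hF : 0 < F := Real.exp_pos _
  have hE2 : E ≤ 1/2 := exp_le_half hk
  have hF2 : F ≤ 1/2 := exp_le_half hl
  have hki : 0 < k⁻¹ := inv_pos.mpr (by linarith)
  have hli : 0 < l⁻¹ := inv_pos.mpr (by linarith)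
  have key : a^2 * (1 + E + F)^2 < (a * (1 + (2 + a) * E)) * (a * (1 + (2 + a) * F)) := by
    have expand : (a * (1 + (2 + a) * E)) * (a * (1 + (2 + a) * F)) - a^2 * (1 + E + F)^2
        = a^2 * (a * (E + F) + (a^2 + 4*a + 2) * (E * F) - E^2 - F^2) := by ring
    have pos : 0 < a * (E + F) + (a^2 + 4*a + 2) * (E * F) - E^2 - F^2 := by
      nlinarith [mul_nonneg hE.le (by linarith : (0:ℝ) ≤ 1/2 - E),
        mul_nonneg hF.le (by linarith : (0:ℝ) ≤ 1/2 - F),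
        mul_pos (show (0:ℝ) < a - 1/2 by linarith) (show (0:ℝ) < E + F by linarith),
        mul_pos hE hF]
    nlinarith [mul_pos (mul_pos ha0 ha0) pos]
  have h1 : a * (1 + (2 + a) * E) ≤ -fkk n k l := by
    unfold fkk
    have : 0 ≤ ((n:ℝ) - k - l - 1) * a^2 * E := by
      apply mul_nonneg (mul_nonneg (by linarith) (sq_nonneg a)) hE.le
    nlinarith
  have h2 : a * (1 + (2 + a) * F) ≤ -fkk n l k := by
    unfold fkk
    have : 0 ≤ ((n:ℝ) - l - k - 1) * a^2 * F := by
      apply mul_nonneg (mul_nonneg (by linarith) (sq_nonneg a)) hF.le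
    nlinarith
  have hP : 0 < a * (1 + (2 + a) * E) := by nlinarith
  have hQ : 0 < a * (1 + (2 + a) * F) := by nlinarith
  have hsq : fkl n k l ^ 2 = a^2 * (1 + E + F)^2 := by unfold fkl; ring
  have prod : (a * (1 + (2 + a) * E)) * (a * (1 + (2 + a) * F)) ≤ fkk n k l * fkk n l k := by
    calc (a * (1 + (2 + a) * E)) * (a * (1 + (2 + a) * F))
        ≤ (-fkk n k l) * (-fkk n l k) := mul_le_mul h1 h2 hQ.le (by linarith)
      _ = fkk n k l * fkk n l k := by ring
  linarith [hsq ▸ (lt_of_lt_of_le key prod)]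

lemma quad_neg {P Q R u v : ℝ} (hP : P < 0) (hdet : 0 < P * R - Q ^ 2)
    (hv : u ≠ 0 ∨ v ≠ 0) : u^2 * P + 2 * u * v * Q + v^2 * R < 0 := by
  have hR : R < 0 := by nlinarith [sq_nonneg Q]
  by_cases h2 : v = 0
  · subst h2
    have hu : u ≠ 0 := hv.resolve_right (by simp)
    have : 0 < u^2 := (sq_nonneg u).lt_of_ne (Ne.symm (pow_ne_zero 2 hu))
    nlinarith
  · have : 0 < v^2 := (sq_nonneg v).lt_of_ne (Ne.symm (pow_ne_zero 2 h2))
    nlinarith [sq_nonneg (u * P + v * Q), mul_pos this hdet]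


lemma hasDerivAt_f_fst (n : ℕ) (l x : ℝ) (hx : 0 < x) (hl : 0 < l) :
    HasDerivAt (fun k' => f n k' l) (fk n x l) x := by
  have := line_hasDerivAt_f n 0 l 1 0 x (by simpa) (by simpa)
  simpa using this

lemma deriv_f_fst (n : ℕ) (l x : ℝ) (hx : 0 < x) (hl : 0 < l) :
    deriv (fun k' => f n k' l) x = fk n x l := (hasDerivAt_f_fst n l x hx hl).deriv

lemma hasDerivAt_fk_fst (n : ℕ) (l k : ℝ) (hk : 0 < k) :
    HasDerivAt (fun x => fk n x l) (fkk n k l) k := by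
  have := line_hasDerivAt_fk n 0 l 1 0 k (by simpa)
  simpa using this

lemma hasDerivAt_fk_snd (n : ℕ) (k l : ℝ) (hk : 0 < k) :
    HasDerivAt (fun y => fk n k y) (fkl n k l) l := by
  have := line_hasDerivAt_fk n k 0 0 1 l (by simpa)
  simpa using this

lemma second_deriv_eq (n : ℕ) (k l : ℝ) (hk : 0 < k) (hl : 0 < l) :
    deriv (deriv (fun k' => f n k' l)) k = fkk n k l := by
  have hev : deriv (fun k' => f n k' l) =ᶠ[𝓝 k] fun x => fk n x l := by
    filter_upwards [Ioi_mem_nhds hk] with x hx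
    exact deriv_f_fst n l x hx hl
  rw [hev.deriv_eq]
  exact (hasDerivAt_fk_fst n l k hk).deriv

lemma f_symm (n : ℕ) (k l : ℝ) : f n k l = f n l k := by unfold f; ring

/-- For `n ≥ 3`, at every point of the region
`R = {(k,l) : k ≥ 1, l ≥ 1, k + l ≤ n − 1}` the Hessian of `f` is negative definite
(`∂²f/∂k² < 0` and the Hessian determinant is positive); consequently `f` is strictly
concave on `R`. -/
theorem hessian_negdef_and_strictConcave (n : ℕ) (hn : 3 ≤ n) :
    (∀ k l : ℝ, 1 ≤ k → 1 ≤ l → k + l ≤ (n : ℝ) - 1 →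
      iteratedDeriv 2 (fun k' => f n k' l) k < 0 ∧
      0 < iteratedDeriv 2 (fun k' => f n k' l) k * iteratedDeriv 2 (fun l' => f n k l') l
            - (deriv (fun l' => deriv (fun k' => f n k' l') k) l) ^ 2) ∧
    StrictConcaveOn ℝ (region n) (fun p : ℝ × ℝ => f n p.1 p.2) := by
  constructor
  · intro k l hk hl hkl
    have hk0 : (0:ℝ) < k := by linarith
    have hl0 : (0:ℝ) < l := by linarith
    have hm : 1 ≤ (n : ℝ) - k - l := by linarith
    have e1 : iteratedDeriv 2 (fun k' => f n k' l) k = fkk n k l := by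
      rw [iteratedDeriv_succ, iteratedDeriv_one]
      exact second_deriv_eq n k l hk0 hl0
    have e2 : iteratedDeriv 2 (fun l' => f n k l') l = fkk n l k := by
      have : (fun l' => f n k l') = fun l' => f n l' k := by
        funext l'; exact f_symm n k l'
      rw [this, iteratedDeriv_succ, iteratedDeriv_one]
      exact second_deriv_eq n l k hl0 hk0
    have e3 : deriv (fun l' => deriv (fun k' => f n k' l') k) l = fkl n k l := by
      have hev : (fun l' => deriv (fun k' => f n k' l') k) =ᶠ[𝓝 l] fun l' => fk n k l' := by
        filter_upwards [Ioi_mem_nhds hl0] with y hy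
        exact deriv_f_fst n y k hk0 hy
      rw [hev.deriv_eq]
      exact (hasDerivAt_fk_snd n k l hk0).deriv
    rw [e1, e2, e3]
    exact ⟨fkk_neg n k l hk hm, det_pos n k l hk hl hm⟩
  · constructor
    · -- convexity of region
      intro p hp q hq a b ha hb hab
      obtain ⟨hp1, hp2, hp3⟩ := hp
      obtain ⟨hq1, hq2, hq3⟩ := hq
      refine ⟨?_, ?_, ?_⟩ <;>
        simp only [Prod.fst_add, Prod.snd_add, Prod.smul_fst, Prod.smul_snd, smul_eq_mul] <;>
        nlinarith
    · intro p hp q hq hpq a b ha hb hab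
      obtain ⟨hp1, hp2, hp3⟩ := hp
      obtain ⟨hq1, hq2, hq3⟩ := hq
      set v₁ : ℝ := q.1 - p.1 with hv₁
      set v₂ : ℝ := q.2 - p.2 with hv₂
      have hbnd : ∀ t : ℝ, 0 ≤ t → t ≤ 1 →
          1 ≤ p.1 + t * v₁ ∧ 1 ≤ p.2 + t * v₂ ∧
            (p.1 + t * v₁) + (p.2 + t * v₂) ≤ (n : ℝ) - 1 := by
        intro t ht0 ht1
        refine ⟨?_, ?_, ?_⟩
        · nlinarith [mul_nonneg (by linarith : (0:ℝ) ≤ 1 - t) (by linarith : (0:ℝ) ≤ p.1 - 1),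
            mul_nonneg ht0 (by linarith : (0:ℝ) ≤ q.1 - 1)]
        · nlinarith [mul_nonneg (by linarith : (0:ℝ) ≤ 1 - t) (by linarith : (0:ℝ) ≤ p.2 - 1),
            mul_nonneg ht0 (by linarith : (0:ℝ) ≤ q.2 - 1)]
        · nlinarith [mul_nonneg (by linarith : (0:ℝ) ≤ 1 - t)
              (by linarith : (0:ℝ) ≤ (n:ℝ) - 1 - p.1 - p.2),
            mul_nonneg ht0 (by linarith : (0:ℝ) ≤ (n:ℝ) - 1 - q.1 - q.2)]
      set g : ℝ → ℝ := fun s => f n (p.1 + s * v₁) (p.2 + s * v₂) with hgdef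
      have hvne : v₁ ≠ 0 ∨ v₂ ≠ 0 := by
        by_contra h
        push_neg at h
        exact hpq (Prod.ext (by rw [hv₁] at h; linarith [h.1])
          (by rw [hv₂] at h; linarith [h.2]))
      have hconc : StrictConcaveOn ℝ (Set.Icc (0:ℝ) 1) g := by
        apply strictConcaveOn_of_deriv2_neg (convex_Icc 0 1)
        · intro t ht
          obtain ⟨h1, h2, h3⟩ := hbnd t ht.1 ht.2
          exact (line_hasDerivAt_f n p.1 p.2 v₁ v₂ t (by linarith)
            (by linarith)).continuousAt.continuousWithinAt
        · intro t ht
          rw [interior_Icc] at ht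
          obtain ⟨h1, h2, h3⟩ := hbnd t ht.1.le ht.2.le
          have hx : 0 < p.1 + t * v₁ := by linarith
          have hy : 0 < p.2 + t * v₂ := by linarith
          have hUopen : IsOpen {s : ℝ | 0 < p.1 + s * v₁ ∧ 0 < p.2 + s * v₂} := by
            have c1 : Continuous fun s : ℝ => p.1 + s * v₁ := by continuity
            have c2 : Continuous fun s : ℝ => p.2 + s * v₂ := by continuity
            exact (isOpen_lt continuous_const c1).inter (isOpen_lt continuous_const c2)
          have hev : deriv g =ᶠ[𝓝 t] fun s =>
              v₁ * fk n (p.1 + s * v₁) (p.2 + s * v₂)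
                + v₂ * fk n (p.2 + s * v₂) (p.1 + s * v₁) := by
            filter_upwards [hUopen.mem_nhds ⟨hx, hy⟩] with s hs
            exact (line_hasDerivAt_f n p.1 p.2 v₁ v₂ s hs.1 hs.2).deriv
          have h2d : HasDerivAt (fun s =>
              v₁ * fk n (p.1 + s * v₁) (p.2 + s * v₂)
                + v₂ * fk n (p.2 + s * v₂) (p.1 + s * v₁))
              (v₁^2 * fkk n (p.1 + t * v₁) (p.2 + t * v₂)
                + 2 * v₁ * v₂ * fkl n (p.1 + t * v₁) (p.2 + t * v₂)
                + v₂^2 * fkk n (p.2 + t * v₂) (p.1 + t * v₁)) t := by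
            have A := (line_hasDerivAt_fk n p.1 p.2 v₁ v₂ t hx).const_mul v₁
            have B := (line_hasDerivAt_fk n p.2 p.1 v₂ v₁ t hy).const_mul v₂
            refine (A.add B).congr_deriv ?_
            unfold fkl
            ring
          have : deriv^[2] g t = deriv (deriv g) t := by
            simp [Function.iterate_succ, Function.iterate_zero, Function.comp]
          rw [this, hev.deriv_eq, h2d.deriv]
          have hm' : 1 ≤ (n:ℝ) - (p.1 + t * v₁) - (p.2 + t * v₂) := by linarith
          exact quad_neg (fkk_neg n _ _ h1 hm')
            (det_pos n (p.1 + t * v₁) (p.2 + t * v₂) h1 h2 hm') hvne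
      have key := hconc.2 (Set.left_mem_Icc.mpr (by norm_num))
        (Set.right_mem_Icc.mpr (by norm_num)) (by norm_num) ha hb hab
      have hsm : a • (0:ℝ) + b • (1:ℝ) = b := by simp
      rw [hsm] at key
      have hg0 : g 0 = f n p.1 p.2 := by simp [hgdef]
      have hg1 : g 1 = f n q.1 q.2 := by
        show f n (p.1 + 1 * v₁) (p.2 + 1 * v₂) = f n q.1 q.2
        rw [hv₁, hv₂]; ring_nf
      have hgb : g b = f n (a • p + b • q).1 (a • p + b • q).2 := by
        show f n (p.1 + b * v₁) (p.2 + b * v₂) = _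
        have ha1 : a = 1 - b := by linarith
        have c1 : (a • p + b • q).1 = a * p.1 + b * q.1 := by
          simp [Prod.fst_add, Prod.smul_fst, smul_eq_mul]
        have c2 : (a • p + b • q).2 = a * p.2 + b * q.2 := by
          simp [Prod.snd_add, Prod.smul_snd, smul_eq_mul]
        rw [c1, c2, hv₁, hv₂, ha1]; ring_nf
      simp only [smul_eq_mul] at key
      rw [hg0, hg1, hgb] at key
      exact key
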